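/- For n = 6, the extreme point x of S^6 on vertices {1,...,6} with x_e = 1 on edges {1,2}, {3,4}, {5,6} and x_e = 1/2 on edges {1,3}, {1,5}, {2,4}, {2,6}, {3,5}, {4,6} (and 0 elsewhere) is a half-integral extreme point of the subtour polytope that is not a convex combination of Hamiltonian cycle incidence vectors restricted to its support, and there exists a metric cost c for which the ratio of the optimal tour length to c^T x equals 10/9. -/

import Mathlib

open Finset
open scoped Classical

noncomputable section

/-- Edge set of the complete graph `K_n` as non-diagonal elements of `Sym2 (Fin n)`. -/
def edgeSet (n : ℕ) : Finset (Sym2 (Fin n)) :=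
  Finset.univ.filter (fun e => ¬ e.IsDiag)

/-- The cut `δ(S)`: edges with exactly one endpoint in `S`. -/
def cut {n : ℕ} (S : Finset (Fin n)) : Finset (Sym2 (Fin n)) :=
  Finset.univ.filter (fun e => ¬ e.IsDiag ∧ ∃ u v : Fin n, e = s(u, v) ∧ u ∈ S ∧ v ∉ S)

/-- Membership in the subtour polytope `S^n`. -/
def InSubtour (n : ℕ) (x : Sym2 (Fin n) → ℝ) : Prop :=
  (∀ e ∈ edgeSet n, 0 ≤ x e ∧ x e ≤ 1) ∧
  (∀ v : Fin n, ∑ e ∈ cut ({v} : Finset (Fin n)), x e = 2) ∧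
  (∀ S : Finset (Fin n), 2 ≤ S.card → S.card ≤ n - 2 → 2 ≤ ∑ e ∈ cut S, x e)

/-- Extreme point of the subtour polytope: not a proper convex combination
(equivalently, not the midpoint of two distinct points of `S^n`). -/
def IsExtremePt (n : ℕ) (x : Sym2 (Fin n) → ℝ) : Prop :=
  InSubtour n x ∧
  ∀ y z : Sym2 (Fin n) → ℝ, InSubtour n y → InSubtour n z →
    (∀ e ∈ edgeSet n, x e = (y e + z e) / 2) → ∀ e ∈ edgeSet n, y e = z e

/-- Support edges of `x`: edges with strictly positive value. -/
def supportEdges {n : ℕ} (x : Sym2 (Fin n) → ℝ) : Finset (Sym2 (Fin n)) :=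
  (edgeSet n).filter (fun e => 0 < x e)

/-- Degree of a vertex in the support graph of `x`. -/
def supDeg {n : ℕ} (x : Sym2 (Fin n) → ℝ) (v : Fin n) : ℕ :=
  (cut ({v} : Finset (Fin n)) ∩ supportEdges x).card

/-- `x` is the incidence vector of a Hamiltonian cycle of `K_n`. -/
def IsHamCycle (n : ℕ) (x : Sym2 (Fin n) → ℝ) : Prop :=
  ∃ σ : Equiv.Perm (Fin n), σ.IsCycle ∧ σ.support = Finset.univ ∧
    ∀ e ∈ edgeSet n, x e = if (∃ v : Fin n, e = s(v, σ v)) then 1 else 0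

/-- Cost `c^T x` over the edges of `K_n`. -/
def cost {n : ℕ} (c x : Sym2 (Fin n) → ℝ) : ℝ := ∑ e ∈ edgeSet n, c e * x e

/-- `c` is a metric cost function: nonnegative (symmetry is built into `Sym2`)
and satisfying the triangle inequality. -/
def IsMetricCost (n : ℕ) (c : Sym2 (Fin n) → ℝ) : Prop :=
  (∀ e, 0 ≤ c e) ∧ ∀ i j k : Fin n, c s(i, k) ≤ c s(i, j) + c s(j, k)

/-- The extreme point on 6 vertices supported on the triangular prism:
value 1 on the matching edges {0,1}, {2,3}, {4,5} and value 1/2 on the two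
triangles {0,2,4} and {1,3,5}. -/
def xPrism : Sym2 (Fin 6) → ℝ := fun e =>
  if e = s((0 : Fin 6), 1) ∨ e = s((2 : Fin 6), 3) ∨ e = s((4 : Fin 6), 5) then 1
  else if e = s((0 : Fin 6), 2) ∨ e = s((0 : Fin 6), 4) ∨ e = s((2 : Fin 6), 4) ∨
          e = s((1 : Fin 6), 3) ∨ e = s((1 : Fin 6), 5) ∨ e = s((3 : Fin 6), 5) then 1 / 2
  else 0


----------------------------------------------------------------
-- Auxiliary machinery
----------------------------------------------------------------
set_option maxRecDepth 4000000
set_option maxHeartbeats 4000000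

namespace PrismAux

/-- `cut` with a computable decidability instance. -/
def cutD (S : Finset (Fin 6)) : Finset (Sym2 (Fin 6)) :=
  Finset.univ.filter (fun e => ¬ e.IsDiag ∧ ∃ u v : Fin 6, e = s(u, v) ∧ u ∈ S ∧ v ∉ S)

lemma cut_eq_cutD (S : Finset (Fin 6)) : cut S = cutD S := by
  ext e; simp only [cut, cutD, Finset.mem_filter]

/-- `edgeSet` with a computable decidability instance. -/
def edgeSetD : Finset (Sym2 (Fin 6)) :=
  Finset.univ.filter (fun e => ¬ e.IsDiag)

lemma edgeSet_eq_D : edgeSet 6 = edgeSetD := by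
  ext e; simp only [edgeSet, edgeSetD, Finset.mem_filter]

lemma mem_edgeSet {n : ℕ} (e : Sym2 (Fin n)) : e ∈ edgeSet n ↔ ¬ e.IsDiag := by
  simp only [edgeSet, Finset.mem_filter, Finset.mem_univ, true_and]

lemma mE (a b : Fin 6) (h : a ≠ b) : s(a, b) ∈ edgeSet 6 :=
  (mem_edgeSet _).mpr (by simp [Sym2.mk_isDiag_iff]; exact h)

/-- doubled prism vector, over ℤ -/
def xZ : Sym2 (Fin 6) → ℤ := fun e =>
  if e = s((0:Fin 6),1) ∨ e = s((2:Fin 6),3) ∨ e = s((4:Fin 6),5) then 2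
  else if e = s((0:Fin 6),2) ∨ e = s((0:Fin 6),4) ∨ e = s((2:Fin 6),4) ∨
          e = s((1:Fin 6),3) ∨ e = s((1:Fin 6),5) ∨ e = s((3:Fin 6),5) then 1
  else 0

lemma xPrism_eq_xZ (e : Sym2 (Fin 6)) : xPrism e = (xZ e : ℝ) / 2 := by
  unfold xPrism xZ; split_ifs <;> norm_num

lemma sum_cut_xPrism (S : Finset (Fin 6)) :
    ∑ e ∈ cut S, xPrism e = ((∑ e ∈ cutD S, xZ e : ℤ) : ℝ) / 2 := by
  rw [cut_eq_cutD]
  push_cast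
  rw [Finset.sum_div]
  exact Finset.sum_congr rfl (fun e _ => xPrism_eq_xZ e)

lemma degZ : ∀ v : Fin 6, ∑ e ∈ cutD ({v} : Finset (Fin 6)), xZ e = 4 := by decide

lemma subtourZ : ∀ S : Finset (Fin 6), 2 ≤ S.card → S.card ≤ 4 →
    4 ≤ ∑ e ∈ cutD S, xZ e := by decide

-- literal descriptions of singleton cuts
lemma cut0 : cut ({0} : Finset (Fin 6)) =
    {s((0:Fin 6),1), s((0:Fin 6),2), s((0:Fin 6),3), s((0:Fin 6),4), s((0:Fin 6),5)} := by
  rw [cut_eq_cutD]; decide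

lemma cut1 : cut ({1} : Finset (Fin 6)) =
    {s((0:Fin 6),1), s((1:Fin 6),2), s((1:Fin 6),3), s((1:Fin 6),4), s((1:Fin 6),5)} := by
  rw [cut_eq_cutD]; decide

lemma cut2 : cut ({2} : Finset (Fin 6)) =
    {s((0:Fin 6),2), s((1:Fin 6),2), s((2:Fin 6),3), s((2:Fin 6),4), s((2:Fin 6),5)} := by
  rw [cut_eq_cutD]; decide

lemma cut3 : cut ({3} : Finset (Fin 6)) =
    {s((0:Fin 6),3), s((1:Fin 6),3), s((2:Fin 6),3), s((3:Fin 6),4), s((3:Fin 6),5)} := by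
  rw [cut_eq_cutD]; decide

lemma cut4 : cut ({4} : Finset (Fin 6)) =
    {s((0:Fin 6),4), s((1:Fin 6),4), s((2:Fin 6),4), s((3:Fin 6),4), s((4:Fin 6),5)} := by
  rw [cut_eq_cutD]; decide

lemma cut5 : cut ({5} : Finset (Fin 6)) =
    {s((0:Fin 6),5), s((1:Fin 6),5), s((2:Fin 6),5), s((3:Fin 6),5), s((4:Fin 6),5)} := by
  rw [cut_eq_cutD]; decide

lemma sum5 (f : Sym2 (Fin 6) → ℝ) (a b c d e : Sym2 (Fin 6))
    (h : a ∉ ({b,c,d,e} : Finset (Sym2 (Fin 6))) ∧ b ∉ ({c,d,e} : Finset (Sym2 (Fin 6)))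
      ∧ c ∉ ({d,e} : Finset (Sym2 (Fin 6))) ∧ d ∉ ({e} : Finset (Sym2 (Fin 6)))) :
    ∑ x ∈ ({a,b,c,d,e} : Finset (Sym2 (Fin 6))), f x = f a + f b + f c + f d + f e := by
  rw [Finset.sum_insert h.1, Finset.sum_insert h.2.1, Finset.sum_insert h.2.2.1,
    Finset.sum_insert h.2.2.2, Finset.sum_singleton]
  ring

lemma sc0 (f : Sym2 (Fin 6) → ℝ) : ∑ e ∈ cut ({0} : Finset (Fin 6)), f e
    = f s(0,1) + f s(0,2) + f s(0,3) + f s(0,4) + f s(0,5) := by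
  rw [cut0]; exact sum5 f _ _ _ _ _ ⟨by decide, by decide, by decide, by decide⟩

lemma sc1 (f : Sym2 (Fin 6) → ℝ) : ∑ e ∈ cut ({1} : Finset (Fin 6)), f e
    = f s(0,1) + f s(1,2) + f s(1,3) + f s(1,4) + f s(1,5) := by
  rw [cut1]; exact sum5 f _ _ _ _ _ ⟨by decide, by decide, by decide, by decide⟩

lemma sc2 (f : Sym2 (Fin 6) → ℝ) : ∑ e ∈ cut ({2} : Finset (Fin 6)), f e
    = f s(0,2) + f s(1,2) + f s(2,3) + f s(2,4) + f s(2,5) := by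
  rw [cut2]; exact sum5 f _ _ _ _ _ ⟨by decide, by decide, by decide, by decide⟩

lemma sc3 (f : Sym2 (Fin 6) → ℝ) : ∑ e ∈ cut ({3} : Finset (Fin 6)), f e
    = f s(0,3) + f s(1,3) + f s(2,3) + f s(3,4) + f s(3,5) := by
  rw [cut3]; exact sum5 f _ _ _ _ _ ⟨by decide, by decide, by decide, by decide⟩

lemma sc4 (f : Sym2 (Fin 6) → ℝ) : ∑ e ∈ cut ({4} : Finset (Fin 6)), f e
    = f s(0,4) + f s(1,4) + f s(2,4) + f s(3,4) + f s(4,5) := by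
  rw [cut4]; exact sum5 f _ _ _ _ _ ⟨by decide, by decide, by decide, by decide⟩

lemma sc5 (f : Sym2 (Fin 6) → ℝ) : ∑ e ∈ cut ({5} : Finset (Fin 6)), f e
    = f s(0,5) + f s(1,5) + f s(2,5) + f s(3,5) + f s(4,5) := by
  rw [cut5]; exact sum5 f _ _ _ _ _ ⟨by decide, by decide, by decide, by decide⟩

-- evaluation of xPrism on the 15 edges
lemma xv01 : xPrism s(0,1) = 1 := by unfold xPrism; rw [if_pos (by decide)]
lemma xv23 : xPrism s(2,3) = 1 := by unfold xPrism; rw [if_pos (by decide)]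
lemma xv45 : xPrism s(4,5) = 1 := by unfold xPrism; rw [if_pos (by decide)]
lemma xv02 : xPrism s(0,2) = 1/2 := by unfold xPrism; rw [if_neg (by decide), if_pos (by decide)]
lemma xv04 : xPrism s(0,4) = 1/2 := by unfold xPrism; rw [if_neg (by decide), if_pos (by decide)]
lemma xv24 : xPrism s(2,4) = 1/2 := by unfold xPrism; rw [if_neg (by decide), if_pos (by decide)]
lemma xv13 : xPrism s(1,3) = 1/2 := by unfold xPrism; rw [if_neg (by decide), if_pos (by decide)]
lemma xv15 : xPrism s(1,5) = 1/2 := by unfold xPrism; rw [if_neg (by decide), if_pos (by decide)]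
lemma xv35 : xPrism s(3,5) = 1/2 := by unfold xPrism; rw [if_neg (by decide), if_pos (by decide)]
lemma xv03 : xPrism s(0,3) = 0 := by unfold xPrism; rw [if_neg (by decide), if_neg (by decide)]
lemma xv05 : xPrism s(0,5) = 0 := by unfold xPrism; rw [if_neg (by decide), if_neg (by decide)]
lemma xv12 : xPrism s(1,2) = 0 := by unfold xPrism; rw [if_neg (by decide), if_neg (by decide)]
lemma xv14 : xPrism s(1,4) = 0 := by unfold xPrism; rw [if_neg (by decide), if_neg (by decide)]
lemma xv25 : xPrism s(2,5) = 0 := by unfold xPrism; rw [if_neg (by decide), if_neg (by decide)]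
lemma xv34 : xPrism s(3,4) = 0 := by unfold xPrism; rw [if_neg (by decide), if_neg (by decide)]

lemma xPrism_mem : InSubtour 6 xPrism := by
  refine ⟨?_, ?_, ?_⟩
  · intro e _; unfold xPrism; split_ifs <;> norm_num
  · intro v
    rw [sum_cut_xPrism, degZ v]; norm_num
  · intro S h1 h2
    rw [sum_cut_xPrism]
    have h3 := subtourZ S h1 (by omega)
    have h4 : (4:ℝ) ≤ ((∑ e ∈ cutD S, xZ e : ℤ):ℝ) := by exact_mod_cast h3
    linarith

-- Hamiltonian cycle machinery
variable {σ : Equiv.Perm (Fin 6)}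

lemma ham_ne (hs : σ.support = Finset.univ) (v : Fin 6) : σ v ≠ v :=
  Equiv.Perm.mem_support.mp (hs ▸ Finset.mem_univ v)

lemma ham_pow (hc : σ.IsCycle) (hs : σ.support = Finset.univ) (v : Fin 6) (n : ℕ)
    (hn : ¬ (6 ∣ n)) : (σ ^ n) v ≠ v := by
  have hset : ({x | σ x ≠ x} : Set (Fin 6)) = ↑(Finset.univ : Finset (Fin 6)) := by
    ext x; simp [ham_ne hs x]
  have hco : σ.IsCycleOn (↑(Finset.univ : Finset (Fin 6)) : Set (Fin 6)) := by
    rw [← hset]; exact hc.isCycleOn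
  intro h
  rw [hco.pow_apply_eq (Finset.mem_univ v)] at h
  simp only [Finset.card_univ, Fintype.card_fin] at h
  exact hn h

lemma ham_sq (hc : σ.IsCycle) (hs : σ.support = Finset.univ) (v : Fin 6) :
    σ (σ v) ≠ v := by
  have := ham_pow hc hs v 2 (by norm_num)
  simpa [pow_succ, Equiv.Perm.mul_apply] using this

lemma ham_cube (hc : σ.IsCycle) (hs : σ.support = Finset.univ) (v : Fin 6) :
    σ (σ (σ v)) ≠ v := by
  have := ham_pow hc hs v 3 (by norm_num)
  simpa [pow_succ, Equiv.Perm.mul_apply] using this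

lemma edge_mem_iff (v u : Fin 6) :
    (∃ w, s(v, u) = s(w, σ w)) ↔ (u = σ v ∨ u = σ⁻¹ v) := by
  constructor
  · rintro ⟨w, hw⟩
    rcases Sym2.eq_iff.mp hw with ⟨rfl, rfl⟩ | ⟨hv, rfl⟩
    · exact Or.inl rfl
    · right; rw [hv, Equiv.Perm.coe_inv, Equiv.symm_apply_apply]
  · rintro (rfl | rfl)
    · exact ⟨v, rfl⟩
    · exact ⟨σ⁻¹ v, Sym2.eq_iff.mpr (Or.inr ⟨(σ.apply_symm_apply v).symm, rfl⟩)⟩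

lemma cut_singleton (v : Fin 6) :
    cut ({v} : Finset (Fin 6)) =
      (Finset.univ.filter (fun u => u ≠ v)).image (fun u => s(v, u)) := by
  ext e
  simp only [cut, Finset.mem_filter, Finset.mem_univ, true_and, Finset.mem_image,
    Finset.mem_singleton]
  constructor
  · rintro ⟨hd, a, b, rfl, ha, hb⟩
    exact ⟨b, hb, by rw [ha]⟩
  · rintro ⟨u, hu, rfl⟩
    refine ⟨by simp [Sym2.mk_isDiag_iff]; exact fun h => hu h.symm, v, u, rfl, rfl, hu⟩

lemma sum_cut_single (v : Fin 6) (f : Sym2 (Fin 6) → ℝ) :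
    ∑ e ∈ cut ({v} : Finset (Fin 6)), f e
      = ∑ u ∈ Finset.univ.filter (fun u => u ≠ v), f s(v, u) := by
  rw [cut_singleton]
  refine Finset.sum_image ?_
  intro a ha b hb hab
  rcases Sym2.eq_iff.mp hab with ⟨_, h⟩ | ⟨h1, h2⟩
  · exact h
  · rw [Finset.mem_coe, Finset.mem_filter] at ha
    exact absurd h2 ha.2

lemma ham_deg {t : Sym2 (Fin 6) → ℝ} (hc : σ.IsCycle) (hs : σ.support = Finset.univ)
    (hx : ∀ e ∈ edgeSet 6, t e = if (∃ w : Fin 6, e = s(w, σ w)) then 1 else 0)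
    (v : Fin 6) : ∑ e ∈ cut ({v} : Finset (Fin 6)), t e = 2 := by
  rw [sum_cut_single]
  have hterm : ∀ u ∈ Finset.univ.filter (fun u => u ≠ v),
      t s(v, u) = if (u = σ v ∨ u = σ⁻¹ v) then (1:ℝ) else 0 := by
    intro u hu
    simp only [Finset.mem_filter] at hu
    rw [hx s(v,u) (mE v u (fun h => hu.2 h.symm))]
    simp only [edge_mem_iff]
  rw [Finset.sum_congr rfl hterm, Finset.sum_boole]
  have hfil : (Finset.univ.filter (fun u => u ≠ v)).filter (fun u => u = σ v ∨ u = σ⁻¹ v)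
      = {σ v, σ⁻¹ v} := by
    ext u
    simp only [Finset.mem_filter, Finset.mem_univ, true_and, Finset.mem_insert,
      Finset.mem_singleton]
    constructor
    · tauto
    · rintro (rfl | rfl)
      · exact ⟨ham_ne hs v, Or.inl rfl⟩
      · refine ⟨fun h => ham_ne hs v ?_, Or.inr rfl⟩
        conv_lhs => rw [← h]
        rw [Equiv.Perm.coe_inv, Equiv.apply_symm_apply]
  rw [hfil]
  rw [Finset.card_insert_of_notMem, Finset.card_singleton]
  · norm_num
  · simp only [Finset.mem_singleton]
    intro h
    exact ham_sq hc hs v (by conv_lhs => rw [h]; rw [Equiv.Perm.coe_inv, Equiv.apply_symm_apply])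

lemma ham_01 {t : Sym2 (Fin 6) → ℝ}
    (hx : ∀ e ∈ edgeSet 6, t e = if (∃ w : Fin 6, e = s(w, σ w)) then 1 else 0)
    (e : Sym2 (Fin 6)) (he : e ∈ edgeSet 6) : t e = 0 ∨ t e = 1 := by
  rw [hx e he]; split_ifs <;> simp

lemma ham_cost {t : Sym2 (Fin 6) → ℝ} (hc : σ.IsCycle) (hs : σ.support = Finset.univ)
    (hx : ∀ e ∈ edgeSet 6, t e = if (∃ w : Fin 6, e = s(w, σ w)) then 1 else 0)
    (c : Sym2 (Fin 6) → ℝ) :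
    cost c t = ∑ v : Fin 6, c s(v, σ v) := by
  unfold cost
  have h1 : ∀ e ∈ edgeSet 6, c e * t e = if (∃ w : Fin 6, e = s(w, σ w)) then c e else 0 := by
    intro e he
    rw [hx e he]
    split_ifs <;> ring
  rw [Finset.sum_congr rfl h1, ← Finset.sum_filter]
  have h2 : (edgeSet 6).filter (fun e => ∃ w : Fin 6, e = s(w, σ w))
      = Finset.univ.image (fun v => s(v, σ v)) := by
    ext e
    simp only [Finset.mem_filter, Finset.mem_image, Finset.mem_univ, true_and, mem_edgeSet]
    constructor
    · rintro ⟨_, w, rfl⟩; exact ⟨w, rfl⟩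
    · rintro ⟨w, rfl⟩
      exact ⟨by simp [Sym2.mk_isDiag_iff]; exact fun h => ham_ne hs w h.symm, w, rfl⟩
  rw [h2]
  refine Finset.sum_image ?_
  intro a _ b _ hab
  rcases Sym2.eq_iff.mp hab with ⟨h, _⟩ | ⟨h1', h2'⟩
  · exact h
  · exfalso
    exact ham_sq hc hs b (by rw [← h1', h2'])

-- uniqueness half of extremality
lemma half_eq (y z : Sym2 (Fin 6) → ℝ) (hy : InSubtour 6 y) (hz : InSubtour 6 z)
    (hmid : ∀ e ∈ edgeSet 6, xPrism e = (y e + z e) / 2) :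
    ∀ e ∈ edgeSet 6, y e = xPrism e := by
  obtain ⟨hyb, hyd, -⟩ := hy
  obtain ⟨hzb, hzd, -⟩ := hz
  have one : ∀ a b : Fin 6, a ≠ b → xPrism s(a,b) = 1 → y s(a,b) = 1 := by
    intro a b hab h1
    have h2 := hmid _ (mE a b hab)
    have h3 := (hyb _ (mE a b hab)).2
    have h4 := (hzb _ (mE a b hab)).2
    rw [h1] at h2; linarith
  have zero : ∀ a b : Fin 6, a ≠ b → xPrism s(a,b) = 0 → y s(a,b) = 0 := by
    intro a b hab h1
    have h2 := hmid _ (mE a b hab)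
    have h3 := (hyb _ (mE a b hab)).1
    have h4 := (hzb _ (mE a b hab)).1
    rw [h1] at h2; linarith
  have h01 : y s(0,1) = 1 := one 0 1 (by decide) xv01
  have h23 : y s(2,3) = 1 := one 2 3 (by decide) xv23
  have h45 : y s(4,5) = 1 := one 4 5 (by decide) xv45
  have z03 : y s(0,3) = 0 := zero 0 3 (by decide) xv03
  have z05 : y s(0,5) = 0 := zero 0 5 (by decide) xv05
  have z12 : y s(1,2) = 0 := zero 1 2 (by decide) xv12
  have z14 : y s(1,4) = 0 := zero 1 4 (by decide) xv14
  have z25 : y s(2,5) = 0 := zero 2 5 (by decide) xv25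
  have z34 : y s(3,4) = 0 := zero 3 4 (by decide) xv34
  have d0 := hyd 0; rw [sc0 y] at d0
  have d1 := hyd 1; rw [sc1 y] at d1
  have d2 := hyd 2; rw [sc2 y] at d2
  have d3 := hyd 3; rw [sc3 y] at d3
  have d4 := hyd 4; rw [sc4 y] at d4
  have d5 := hyd 5; rw [sc5 y] at d5
  have h02 : y s(0,2) = 1/2 := by linarith
  have h04 : y s(0,4) = 1/2 := by linarith
  have h24 : y s(2,4) = 1/2 := by linarith
  have h13 : y s(1,3) = 1/2 := by linarith
  have h15 : y s(1,5) = 1/2 := by linarith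
  have h35 : y s(3,5) = 1/2 := by linarith
  have f01 : y s(0,1) = xPrism s(0,1) := by rw [xv01, h01]
  have f23 : y s(2,3) = xPrism s(2,3) := by rw [xv23, h23]
  have f45 : y s(4,5) = xPrism s(4,5) := by rw [xv45, h45]
  have f02 : y s(0,2) = xPrism s(0,2) := by rw [xv02, h02]
  have f04 : y s(0,4) = xPrism s(0,4) := by rw [xv04, h04]
  have f24 : y s(2,4) = xPrism s(2,4) := by rw [xv24, h24]
  have f13 : y s(1,3) = xPrism s(1,3) := by rw [xv13, h13]
  have f15 : y s(1,5) = xPrism s(1,5) := by rw [xv15, h15]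
  have f35 : y s(3,5) = xPrism s(3,5) := by rw [xv35, h35]
  have f03 : y s(0,3) = xPrism s(0,3) := by rw [xv03, z03]
  have f05 : y s(0,5) = xPrism s(0,5) := by rw [xv05, z05]
  have f12 : y s(1,2) = xPrism s(1,2) := by rw [xv12, z12]
  have f14 : y s(1,4) = xPrism s(1,4) := by rw [xv14, z14]
  have f25 : y s(2,5) = xPrism s(2,5) := by rw [xv25, z25]
  have f34 : y s(3,4) = xPrism s(3,4) := by rw [xv34, z34]
  intro e
  induction e using Sym2.ind with
  | _ a b =>
    intro he
    rw [mem_edgeSet] at he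
    have hab : a ≠ b := fun h => he (by rw [h]; exact Sym2.mk_isDiag_iff.mpr rfl)
    fin_cases a <;> fin_cases b <;>
      first
        | exact absurd rfl hab
        | assumption
        | (rw [Sym2.eq_swap]; assumption)

-- the cost function: matching edges 1, triangle edges 2, non-edges 3, diagonal 0
def cZ : Sym2 (Fin 6) → ℤ := fun e =>
  if e = s((0:Fin 6),1) ∨ e = s((2:Fin 6),3) ∨ e = s((4:Fin 6),5) then 1
  else if e = s((0:Fin 6),2) ∨ e = s((0:Fin 6),4) ∨ e = s((2:Fin 6),4) ∨
          e = s((1:Fin 6),3) ∨ e = s((1:Fin 6),5) ∨ e = s((3:Fin 6),5) then 2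
  else if e.IsDiag then 0 else 3

lemma cZ_nonneg : ∀ e, 0 ≤ cZ e := by decide

lemma cZ_tri : ∀ i j k : Fin 6, cZ s(i,k) ≤ cZ s(i,j) + cZ s(j,k) := by decide

lemma cZ_lp : ∑ e ∈ edgeSetD, cZ e * xZ e = 18 := by decide

lemma permMin : ∀ σ : Equiv.Perm (Fin 6), (∀ v, σ v ≠ v ∧ σ (σ v) ≠ v ∧ σ (σ (σ v)) ≠ v) →
    (10:ℤ) ≤ ∑ v : Fin 6, cZ s(v, σ v) := by decide

def σ₀ : Equiv.Perm (Fin 6) := ([0, 1, 3, 5, 4, 2] : List (Fin 6)).formPerm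

lemma σ₀_cycle : σ₀.IsCycle := List.isCycle_formPerm (by decide) (by norm_num)

lemma σ₀_support : σ₀.support = Finset.univ := by
  rw [σ₀, List.support_formPerm_of_nodup _ (by decide) (by decide)]
  decide

end PrismAux

/-- The prism point is a half-integral extreme point of `S^6`, is not a convex
combination of Hamiltonian cycle incidence vectors supported within its
support, and there is a metric whose optimal-tour-to-LP-value ratio at this
point equals 10/9. -/
theorem prism_extreme_point :
    IsExtremePt 6 xPrism ∧
    (∀ e ∈ edgeSet 6, xPrism e = 0 ∨ xPrism e = 1 / 2 ∨ xPrism e = 1) ∧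
    (¬ ∃ (k : ℕ) (t : Fin k → Sym2 (Fin 6) → ℝ) (lam : Fin k → ℝ),
      (∀ i, IsHamCycle 6 (t i)) ∧
      (∀ i, ∀ e ∈ edgeSet 6, 0 < t i e → 0 < xPrism e) ∧
      (∀ i, 0 ≤ lam i) ∧ (∑ i, lam i = 1) ∧
      (∀ e ∈ edgeSet 6, xPrism e = ∑ i, lam i * t i e)) ∧
    (∃ c : Sym2 (Fin 6) → ℝ, IsMetricCost 6 c ∧ 0 < cost c xPrism ∧
      ∃ t : Sym2 (Fin 6) → ℝ, IsHamCycle 6 t ∧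
        (∀ t' : Sym2 (Fin 6) → ℝ, IsHamCycle 6 t' → cost c t ≤ cost c t') ∧
        cost c t / cost c xPrism = 10 / 9) := by
  refine ⟨⟨PrismAux.xPrism_mem, ?_⟩, ?_, ?_, ?_⟩
  · -- extremality
    intro y z hy hz hmid e he
    rw [PrismAux.half_eq y z hy hz hmid e he,
        PrismAux.half_eq z y hz hy (fun e' he' => by rw [hmid e' he']; ring) e he]
  · -- half-integrality
    intro e _; unfold xPrism; split_ifs <;> norm_num
  · -- not a convex combination of Hamiltonian cycles in the support
    rintro ⟨k, t, lam, hham, hsupp, hlam0, hlam1, hrep⟩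
    have hb : ∀ i, t i s(0,1) + t i s(2,3) + t i s(4,5) ≤ 2 := by
      intro i
      obtain ⟨σ, hc, hs, hx⟩ := hham i
      have zv : ∀ a b : Fin 6, a ≠ b → xPrism s(a,b) = 0 → t i s(a,b) = 0 := by
        intro a b hab h0
        rcases PrismAux.ham_01 hx _ (PrismAux.mE a b hab) with h | h
        · exact h
        · exfalso
          have h2 := hsupp i s(a,b) (PrismAux.mE a b hab) (by rw [h]; norm_num)
          rw [h0] at h2; exact lt_irrefl _ h2
      have z03 := zv 0 3 (by decide) PrismAux.xv03
      have z05 := zv 0 5 (by decide) PrismAux.xv05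
      have z12 := zv 1 2 (by decide) PrismAux.xv12
      have z25 := zv 2 5 (by decide) PrismAux.xv25
      have z14 := zv 1 4 (by decide) PrismAux.xv14
      have z34 := zv 3 4 (by decide) PrismAux.xv34
      have d0 := PrismAux.ham_deg hc hs hx 0; rw [PrismAux.sc0 (t i)] at d0
      have d2 := PrismAux.ham_deg hc hs hx 2; rw [PrismAux.sc2 (t i)] at d2
      have d4 := PrismAux.ham_deg hc hs hx 4; rw [PrismAux.sc4 (t i)] at d4
      rcases PrismAux.ham_01 hx _ (PrismAux.mE 0 1 (by decide)) with h1 | h1 <;>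
      rcases PrismAux.ham_01 hx _ (PrismAux.mE 2 3 (by decide)) with h2 | h2 <;>
      rcases PrismAux.ham_01 hx _ (PrismAux.mE 4 5 (by decide)) with h3 | h3 <;>
      rcases PrismAux.ham_01 hx _ (PrismAux.mE 0 2 (by decide)) with h4 | h4 <;>
      rcases PrismAux.ham_01 hx _ (PrismAux.mE 0 4 (by decide)) with h5 | h5 <;>
      rcases PrismAux.ham_01 hx _ (PrismAux.mE 2 4 (by decide)) with h6 | h6 <;>
        linarith
    have key : (3:ℝ) = ∑ i, lam i * (t i s(0,1) + t i s(2,3) + t i s(4,5)) := by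
      have e1 := hrep s(0,1) (PrismAux.mE 0 1 (by decide)); rw [PrismAux.xv01] at e1
      have e2 := hrep s(2,3) (PrismAux.mE 2 3 (by decide)); rw [PrismAux.xv23] at e2
      have e3 := hrep s(4,5) (PrismAux.mE 4 5 (by decide)); rw [PrismAux.xv45] at e3
      simp only [mul_add, Finset.sum_add_distrib]
      linarith
    have hle : ∑ i, lam i * (t i s(0,1) + t i s(2,3) + t i s(4,5)) ≤ 2 := by
      calc ∑ i, lam i * (t i s(0,1) + t i s(2,3) + t i s(4,5))
          ≤ ∑ i, lam i * 2 :=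
            Finset.sum_le_sum (fun i _ => mul_le_mul_of_nonneg_left (hb i) (hlam0 i))
        _ = 2 := by rw [← Finset.sum_mul, hlam1, one_mul]
    linarith
  · -- the metric with gap 10/9
    set c : Sym2 (Fin 6) → ℝ := fun e => (PrismAux.cZ e : ℝ) with hcdef
    have h9 : cost c xPrism = 9 := by
      unfold cost
      rw [PrismAux.edgeSet_eq_D]
      have hterm : ∀ e ∈ PrismAux.edgeSetD, c e * xPrism e
          = ((PrismAux.cZ e * PrismAux.xZ e : ℤ) : ℝ) / 2 := by
        intro e _; rw [PrismAux.xPrism_eq_xZ, hcdef]; push_cast; ring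
      rw [Finset.sum_congr rfl hterm, ← Finset.sum_div]
      have hcast : ∑ e ∈ PrismAux.edgeSetD, ((PrismAux.cZ e * PrismAux.xZ e : ℤ) : ℝ)
          = ((∑ e ∈ PrismAux.edgeSetD, PrismAux.cZ e * PrismAux.xZ e : ℤ) : ℝ) := by
        push_cast; rfl
      rw [hcast, PrismAux.cZ_lp]; norm_num
    refine ⟨c, ⟨fun e => by simp only [hcdef]; exact_mod_cast PrismAux.cZ_nonneg e,
      fun i j k => by simp only [hcdef]; exact_mod_cast PrismAux.cZ_tri i j k⟩, by rw [h9]; norm_num, ?_⟩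
    refine ⟨fun e => if (∃ v : Fin 6, e = s(v, PrismAux.σ₀ v)) then 1 else 0,
      ⟨PrismAux.σ₀, PrismAux.σ₀_cycle, PrismAux.σ₀_support, fun e _ => rfl⟩, ?_, ?_⟩
    · -- optimality
      rintro t' ⟨σ', hc', hs', hx'⟩
      rw [PrismAux.ham_cost PrismAux.σ₀_cycle PrismAux.σ₀_support (fun e _ => rfl) c,
        PrismAux.ham_cost hc' hs' hx' c]
      have hcond : ∀ v, σ' v ≠ v ∧ σ' (σ' v) ≠ v ∧ σ' (σ' (σ' v)) ≠ v :=
        fun v => ⟨PrismAux.ham_ne hs' v, PrismAux.ham_sq hc' hs' v,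
          PrismAux.ham_cube hc' hs' v⟩
      have hz := PrismAux.permMin σ' hcond
      have h10' : ∑ v : Fin 6, c s(v, PrismAux.σ₀ v) = 10 := by
        simp only [hcdef, Fin.sum_univ_six]
        rw [show PrismAux.σ₀ 0 = 1 from by decide, show PrismAux.σ₀ 1 = 3 from by decide,
            show PrismAux.σ₀ 2 = 0 from by decide, show PrismAux.σ₀ 3 = 5 from by decide,
            show PrismAux.σ₀ 4 = 2 from by decide, show PrismAux.σ₀ 5 = 4 from by decide,
            show PrismAux.cZ s(0,1) = 1 from by decide,
            show PrismAux.cZ s(1,3) = 2 from by decide,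
            show PrismAux.cZ s(2,0) = 2 from by decide,
            show PrismAux.cZ s(3,5) = 2 from by decide,
            show PrismAux.cZ s(4,2) = 2 from by decide,
            show PrismAux.cZ s(5,4) = 1 from by decide]
        norm_num
      rw [h10']
      have : ((10:ℤ):ℝ) ≤ ((∑ v : Fin 6, PrismAux.cZ s(v, σ' v) : ℤ) : ℝ) :=
        Int.cast_le.mpr hz
      push_cast at this
      exact this
    · -- the ratio
      rw [PrismAux.ham_cost PrismAux.σ₀_cycle PrismAux.σ₀_support (fun e _ => rfl) c, h9]
      have h10' : ∑ v : Fin 6, c s(v, PrismAux.σ₀ v) = 10 := by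
        simp only [hcdef, Fin.sum_univ_six]
        rw [show PrismAux.σ₀ 0 = 1 from by decide, show PrismAux.σ₀ 1 = 3 from by decide,
            show PrismAux.σ₀ 2 = 0 from by decide, show PrismAux.σ₀ 3 = 5 from by decide,
            show PrismAux.σ₀ 4 = 2 from by decide, show PrismAux.σ₀ 5 = 4 from by decide,
            show PrismAux.cZ s(0,1) = 1 from by decide,
            show PrismAux.cZ s(1,3) = 2 from by decide,
            show PrismAux.cZ s(2,0) = 2 from by decide,
            show PrismAux.cZ s(3,5) = 2 from by decide,
            show PrismAux.cZ s(4,2) = 2 from by decide,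
            show PrismAux.cZ s(5,4) = 1 from by decide]
        norm_num
      rw [h10']
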